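/- Let A : H₁ → H₂ be a Hilbert–Schmidt operator, W_n : ℝⁿ → H₁ a linear isometry, Ω ∈ ℝ^{n×r} any matrix, and Z_m : ℝᵐ → H₂ a linear isometry whose range contains range(A W_n). If Q ∈ ℝ^{m×r'} has orthonormal columns spanning range(Z_m* A W_n Ω), then the quasi-matrix Z_m Q has orthonormal columns and its range equals range(A W_n Ω). Consequently, ‖A − (Z_m Q)(Z_m Q)* A‖_HS ≤ ‖A − Z_m Q Q* Z_m* A W_n W_n*‖_HS. -/

import Mathlib

open scoped RealInnerProductSpace

section aux
variable {E : Type*} [NormedAddCommGroup E] [InnerProductSpace ℝ E]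

lemma aux_perp {k : ℕ} {v : Fin k → E} (hv : Orthonormal ℝ v) (x : E) (i : Fin k) :
    ⟪v i, x - ∑ j, ⟪v j, x⟫ • v j⟫ = 0 := by
  rw [inner_sub_right, hv.inner_right_fintype]
  exact sub_self _

lemma aux_min_sq {k : ℕ} {v : Fin k → E} (hv : Orthonormal ℝ v) (x : E) (c : Fin k → ℝ) :
    ‖x - ∑ j, ⟪v j, x⟫ • v j‖ ^ 2 ≤ ‖x - ∑ j, c j • v j‖ ^ 2 := by
  have key : x - ∑ j, c j • v j
      = (x - ∑ j, ⟪v j, x⟫ • v j) + ∑ j, (⟪v j, x⟫ - c j) • v j := by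
    rw [Finset.sum_congr rfl (fun j _ => sub_smul (⟪v j, x⟫) (c j) (v j)),
      Finset.sum_sub_distrib]
    abel
  have hperp : ⟪x - ∑ j, ⟪v j, x⟫ • v j, ∑ j, (⟪v j, x⟫ - c j) • v j⟫ = 0 := by
    rw [inner_sum]
    refine Finset.sum_eq_zero fun j _ => ?_
    have h0 := aux_perp hv x j
    rw [real_inner_comm] at h0
    rw [real_inner_smul_right, h0, mul_zero]
  rw [key, norm_add_sq_real, hperp]
  nlinarith [sq_nonneg ‖∑ j, (⟪v j, x⟫ - c j) • v j‖]

lemma aux_bessel {k : ℕ} {v : Fin k → E} (hv : Orthonormal ℝ v) (x : E) :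
    ‖∑ j, ⟪v j, x⟫ • v j‖ ^ 2 ≤ ‖x‖ ^ 2 := by
  have key : x = (x - ∑ j, ⟪v j, x⟫ • v j) + ∑ j, ⟪v j, x⟫ • v j := by abel
  have hperp : ⟪x - ∑ j, ⟪v j, x⟫ • v j, ∑ j, ⟪v j, x⟫ • v j⟫ = 0 := by
    rw [inner_sum]
    refine Finset.sum_eq_zero fun j _ => ?_
    have h0 := aux_perp hv x j
    rw [real_inner_comm] at h0
    rw [real_inner_smul_right, h0, mul_zero]
  conv_rhs => rw [key]
  rw [norm_add_sq_real, hperp]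
  nlinarith [sq_nonneg ‖x - ∑ j, ⟪v j, x⟫ • v j‖]

lemma aux_norm_sum_sq {k : ℕ} {v : Fin k → E} (hv : Orthonormal ℝ v) (c : Fin k → ℝ) :
    ‖∑ j, c j • v j‖ ^ 2 = ∑ j, c j ^ 2 := by
  have : ⟪∑ j, c j • v j, ∑ j, c j • v j⟫ = ∑ j, c j ^ 2 := by
    rw [sum_inner]
    refine Finset.sum_congr rfl fun j _ => ?_
    rw [real_inner_smul_left, hv.inner_right_fintype]
    ring
  rw [← real_inner_self_eq_norm_sq, this]

end aux

theorem sketch_projection_error_le_discretized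
    {H₁ H₂ : Type*}
    [NormedAddCommGroup H₁] [InnerProductSpace ℝ H₁] [CompleteSpace H₁]
    [NormedAddCommGroup H₂] [InnerProductSpace ℝ H₂] [CompleteSpace H₂]
    (A : H₁ →L[ℝ] H₂)
    (e : HilbertBasis ℕ ℝ H₁)
    (hHS : Summable fun i => ‖A (e i)‖ ^ 2)
    {m n r r' : ℕ}
    (W : EuclideanSpace ℝ (Fin n) →ₗᵢ[ℝ] H₁)
    (Z : EuclideanSpace ℝ (Fin m) →ₗᵢ[ℝ] H₂)
    (hrange : ∀ x : EuclideanSpace ℝ (Fin n), A (W x) ∈ Set.range Z)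
    (Ω : Matrix (Fin n) (Fin r) ℝ)
    (Q : Fin r' → EuclideanSpace ℝ (Fin m))
    (hQ : Orthonormal ℝ Q)
    (hQspan : Submodule.span ℝ (Set.range Q)
      = Submodule.span ℝ (Set.range fun j : Fin r =>
          (WithLp.toLp 2 (fun k : Fin m => ⟪Z (EuclideanSpace.single k 1),
              ∑ i : Fin n, Ω i j • A (W (EuclideanSpace.single i 1))⟫)
            : EuclideanSpace ℝ (Fin m)))) :
    Orthonormal ℝ (fun j : Fin r' => Z (Q j)) ∧
    Submodule.span ℝ (Set.range fun j : Fin r' => Z (Q j))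
      = Submodule.span ℝ (Set.range fun j : Fin r =>
          ∑ i : Fin n, Ω i j • A (W (EuclideanSpace.single i 1))) ∧
    (∑' i, ‖A (e i) - ∑ j : Fin r', ⟪Z (Q j), A (e i)⟫ • Z (Q j)‖ ^ 2
      ≤ ∑' i, ‖A (e i) - ∑ j : Fin r',
          ⟪Z (Q j), A (∑ l : Fin n, ⟪W (EuclideanSpace.single l 1), e i⟫
              • W (EuclideanSpace.single l 1))⟫ • Z (Q j)‖ ^ 2) := by
  have hZQ : Orthonormal ℝ (fun j : Fin r' => Z (Q j)) := hQ.comp_linearIsometry Z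
  -- span part
  set s : Fin r → H₂ := fun j => ∑ i : Fin n, Ω i j • A (W (EuclideanSpace.single i 1)) with hs
  set c : Fin r → EuclideanSpace ℝ (Fin m) := fun j =>
    WithLp.toLp 2 (fun k : Fin m => ⟪Z (EuclideanSpace.single k 1), s j⟫) with hc
  have hZc : ∀ j, Z (c j) = s j := by
    intro j
    obtain ⟨y, hy⟩ : s j ∈ LinearMap.range Z.toLinearMap := by
      refine Submodule.sum_mem _ fun i _ => Submodule.smul_mem _ _ ?_
      obtain ⟨x, hx⟩ := hrange (EuclideanSpace.single i 1)
      exact ⟨x, hx⟩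
    have hcy : c j = y := by
      ext k
      have h1 : ⟪Z (EuclideanSpace.single k 1), Z y⟫
          = ⟪(EuclideanSpace.single k (1:ℝ) : EuclideanSpace ℝ (Fin m)), y⟫ :=
        Z.inner_map_map _ _
      have h2 : Z y = s j := hy
      simp only [hc, ← h2, h1, PiLp.toLp_apply, EuclideanSpace.inner_single_left, map_one, one_mul]
    rw [hcy]
    exact hy
  have hspan2 : Submodule.span ℝ (Set.range fun j : Fin r' => Z (Q j))
      = Submodule.span ℝ (Set.range s) := by
    have h1 : (Set.range fun j : Fin r' => Z (Q j)) = Z.toLinearMap '' (Set.range Q) := by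
      rw [← Set.range_comp]; rfl
    have h2 : (Set.range fun j : Fin r => Z (c j)) = Z.toLinearMap '' (Set.range c) := by
      rw [← Set.range_comp]; rfl
    have h3 : (Set.range fun j : Fin r => Z (c j)) = Set.range s :=
      congrArg Set.range (funext hZc)
    rw [h1, Submodule.span_image, hQspan, ← Submodule.span_image, ← h2, h3]
  -- inequality part
  have hWsingle : Orthonormal ℝ (fun l : Fin n => W (EuclideanSpace.single l (1:ℝ))) :=
    (EuclideanSpace.orthonormal_single (𝕜 := ℝ) (ι := Fin n)).comp_linearIsometry W
  have hsum : ∀ l : Fin n, Summable fun i => ⟪W (EuclideanSpace.single l (1:ℝ)), e i⟫ ^ 2 := by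
    intro l
    have := e.summable_inner_mul_inner (W (EuclideanSpace.single l 1)) (W (EuclideanSpace.single l 1))
    refine this.congr fun i => ?_
    rw [real_inner_comm]
    ring
  have hL : Summable (fun i => ‖A (e i) - ∑ j : Fin r', ⟪Z (Q j), A (e i)⟫ • Z (Q j)‖ ^ 2) := by
    refine Summable.of_nonneg_of_le (fun i => by positivity) (fun i => ?_) hHS
    simpa using aux_min_sq hZQ (A (e i)) (fun _ => (0:ℝ))
  have hR : Summable (fun i => ‖A (e i) - ∑ j : Fin r',
      ⟪Z (Q j), A (∑ l : Fin n, ⟪W (EuclideanSpace.single l 1), e i⟫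
          • W (EuclideanSpace.single l 1))⟫ • Z (Q j)‖ ^ 2) := by
    have hB : Summable (fun i => 2 * ‖A (e i)‖ ^ 2
        + 2 * (‖A‖ ^ 2 * ∑ l : Fin n, ⟪W (EuclideanSpace.single l 1), e i⟫ ^ 2)) := by
      have h6 : Summable (fun i => ∑ l : Fin n, ⟪W (EuclideanSpace.single l 1), e i⟫ ^ 2) :=
        summable_sum (fun l _ => hsum l)
      exact (hHS.mul_left 2).add ((h6.mul_left (‖A‖ ^ 2)).mul_left 2)
    refine Summable.of_nonneg_of_le (fun i => by positivity) (fun i => ?_) hB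
    set g : H₁ := ∑ l : Fin n, ⟪W (EuclideanSpace.single l 1), e i⟫ • W (EuclideanSpace.single l 1) with hg
    set y : H₂ := ∑ j : Fin r', ⟪Z (Q j), A g⟫ • Z (Q j) with hy
    have h1 : ‖y‖ ^ 2 ≤ ‖A g‖ ^ 2 := by
      have := aux_bessel hZQ (A g)
      simpa [hy] using this
    have h2 : ‖A g‖ ≤ ‖A‖ * ‖g‖ := A.le_opNorm g
    have h3 : ‖g‖ ^ 2 = ∑ l : Fin n, ⟪W (EuclideanSpace.single l 1), e i⟫ ^ 2 := by
      rw [hg]; exact aux_norm_sum_sq hWsingle _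
    have h4 : ‖A (e i) - y‖ ≤ ‖A (e i)‖ + ‖y‖ := norm_sub_le _ _
    have h5 : ‖A g‖ ^ 2 ≤ ‖A‖ ^ 2 * ‖g‖ ^ 2 := by
      nlinarith [norm_nonneg (A g), norm_nonneg g, A.opNorm_nonneg]
    have h6 : ‖A (e i) - y‖ ^ 2 ≤ (‖A (e i)‖ + ‖y‖) ^ 2 :=
      pow_le_pow_left₀ (norm_nonneg _) h4 2
    nlinarith [sq_nonneg (‖A (e i)‖ - ‖y‖), norm_nonneg (A (e i)), norm_nonneg y]
  refine ⟨hZQ, hspan2, ?_⟩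
  refine Summable.tsum_le_tsum (fun i => ?_) hL hR
  exact aux_min_sq hZQ (A (e i)) _
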